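/- With V = (W + c·(tr W)·I_p)⁻¹, one has tr(V³ W) ≤ tr(V² W)·tr(V)·(1 − (p − 1)c/(p(1 + c))). -/

import Mathlib

open Matrix Finset

theorem trace_V3W_refined_bound (p : ℕ) (hp : 1 ≤ p) (W : Matrix (Fin p) (Fin p) ℝ)
    (hW : W.PosSemidef) (htr : 0 < W.trace) (c : ℝ) (hc : 0 < c)
    (V : Matrix (Fin p) (Fin p) ℝ) (hV : V = (W + (c * W.trace) • 1)⁻¹) :
    (V * V * V * W).trace
      ≤ (V * V * W).trace * V.trace * (1 - ((p : ℝ) - 1) * c / (p * (1 + c))) := by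
  have hH := hW.1
  set U : Matrix (Fin p) (Fin p) ℝ := (hH.eigenvectorUnitary : Matrix (Fin p) (Fin p) ℝ)
    with hUdef
  have hU1 : star U * U = 1 := by
    simpa [hUdef] using unitary.coe_star_mul_self hH.eigenvectorUnitary
  have hU2 : U * star U = 1 := by
    simpa [hUdef] using unitary.coe_mul_star_self hH.eigenvectorUnitary
  set l : Fin p → ℝ := hH.eigenvalues with hldef
  have hspec : W = U * diagonal l * star U := by simpa using hH.spectral_theorem
  set s : ℝ := W.trace with hsdef
  set t : ℝ := c * s with htdef
  have ht : 0 < t := mul_pos hc htr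
  have hl0 : ∀ i, 0 ≤ l i := fun i => hW.eigenvalues_nonneg i
  have hmul : ∀ f g : Fin p → ℝ,
      (U * diagonal f * star U) * (U * diagonal g * star U)
        = U * diagonal (fun i => f i * g i) * star U := by
    intro f g
    calc (U * diagonal f * star U) * (U * diagonal g * star U)
        = U * (diagonal f * (star U * U) * diagonal g) * star U := by
          simp only [Matrix.mul_assoc]
      _ = U * diagonal (fun i => f i * g i) * star U := by
          rw [hU1, Matrix.mul_one, diagonal_mul_diagonal]
  have htrace : ∀ f : Fin p → ℝ,
      (U * diagonal f * star U).trace = ∑ i, f i := by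
    intro f
    rw [Matrix.trace_mul_cycle, hU1, Matrix.one_mul, trace_diagonal]
  have hsum : ∑ i, l i = s := by
    rw [hsdef]; conv_rhs => rw [hspec]
    rw [htrace]
  have hlle : ∀ i, l i ≤ s := by
    intro i
    rw [← hsum]
    exact Finset.single_le_sum (fun j _ => hl0 j) (mem_univ i)
  have hd : ∀ i, 0 < l i + t := fun i => add_pos_of_nonneg_of_pos (hl0 i) ht
  have hWt : W + (c * W.trace) • 1 = U * diagonal (fun i => l i + t) * star U := by
    have hsmul : (t • (1 : Matrix (Fin p) (Fin p) ℝ)) = diagonal (fun _ : Fin p => t) := by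
      rw [Matrix.smul_one_eq_diagonal]
    have h2 : U * diagonal (fun _ : Fin p => t) * star U = t • 1 := by
      rw [← hsmul, Matrix.mul_smul, Matrix.mul_one, Matrix.smul_mul, hU2]
    calc W + (c * W.trace) • 1
        = U * diagonal l * star U + U * diagonal (fun _ : Fin p => t) * star U := by
          rw [← hspec, h2, ← hsdef, ← htdef]
      _ = U * (diagonal l + diagonal (fun _ : Fin p => t)) * star U := by
          rw [Matrix.mul_add, Matrix.add_mul]
      _ = U * diagonal (fun i => l i + t) * star U := by
          rw [diagonal_add]
  have hVform : V = U * diagonal (fun i => (l i + t)⁻¹) * star U := by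
    rw [hV]
    apply Matrix.inv_eq_right_inv
    rw [hWt, hmul]
    have : (fun i => (l i + t) * (l i + t)⁻¹) = fun _ : Fin p => (1:ℝ) := by
      funext i; exact mul_inv_cancel₀ (hd i).ne'
    rw [this, diagonal_one, Matrix.mul_one, hU2]
  set b : Fin p → ℝ := fun i => (l i + t)⁻¹ with hbdef
  have htrV : V.trace = ∑ i, b i := by rw [hVform, htrace]
  have htrV2W : (V * V * W).trace = ∑ i, b i * b i * l i := by
    rw [hVform, hspec, hmul, hmul, htrace]
  have htrV3W : (V * V * V * W).trace = ∑ i, b i * b i * b i * l i := by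
    rw [hVform, hspec, hmul, hmul, hmul, htrace]
  rw [htrV, htrV2W, htrV3W]
  -- scalar inequality
  have hpR : (1:ℝ) ≤ (p:ℝ) := by exact_mod_cast hp
  have hpR0 : (0:ℝ) < (p:ℝ) := by linarith
  have h1c : (0:ℝ) < 1 + c := by linarith
  set κ : ℝ := 1 - ((p : ℝ) - 1) * c / ((p:ℝ) * (1 + c)) with hκdef
  have hκc : 1 - κ = ((p:ℝ) - 1) * c / ((p:ℝ) * (1 + c)) := by rw [hκdef]; ring
  have hκeq : κ = ((p:ℝ) + c) / ((p:ℝ) * (1 + c)) := by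
    rw [hκdef]; field_simp; ring
  have hκle1 : κ ≤ 1 := by
    have : 0 ≤ ((p:ℝ) - 1) * c / ((p:ℝ) * (1 + c)) :=
      div_nonneg (mul_nonneg (by linarith) hc.le) (by positivity)
    rw [hκdef]; linarith
  have hκpos : 0 < κ := by rw [hκeq]; positivity
  have hbpos : ∀ i, 0 < b i := fun i => inv_pos.2 (hd i)
  have hble : ∀ i, b i ≤ t⁻¹ := fun i =>
    inv_anti₀ ht (le_add_of_nonneg_left (hl0 i))
  have hst : 0 < s + t := by linarith
  have hbge : ∀ i, (s + t)⁻¹ ≤ b i := fun i =>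
    inv_anti₀ (hd i) (by linarith [hlle i])
  have hSb : ∀ i, b i + ((p:ℝ) - 1) * (s + t)⁻¹ ≤ ∑ j, b j := by
    intro i
    rw [← Finset.sum_erase_add _ _ (mem_univ i)]
    have hcard : ((univ.erase i).card : ℝ) = (p:ℝ) - 1 := by
      rw [Finset.card_erase_of_mem (mem_univ i)]
      simp [Nat.cast_sub hp]
    have : ((p:ℝ) - 1) * (s + t)⁻¹ ≤ ∑ j ∈ univ.erase i, b j := by
      rw [← hcard]
      calc ((univ.erase i).card : ℝ) * (s + t)⁻¹
          = ∑ _j ∈ univ.erase i, (s + t)⁻¹ := by rw [Finset.sum_const, nsmul_eq_mul]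
        _ ≤ ∑ j ∈ univ.erase i, b j := Finset.sum_le_sum (fun j _ => hbge j)
    linarith
  have hkey : ∀ i, b i ≤ κ * ∑ j, b j := by
    intro i
    have h1 : (1 - κ) * b i ≤ (1 - κ) * t⁻¹ :=
      mul_le_mul_of_nonneg_left (hble i) (by linarith)
    have h2 : (1 - κ) * t⁻¹ ≤ κ * (((p:ℝ) - 1) * (s + t)⁻¹) := by
      have e1 : (1 - κ) * t⁻¹ = ((p:ℝ) - 1) / ((p:ℝ) * (1 + c) * s) := by
        rw [hκc, htdef]; field_simp
      have e2 : κ * (((p:ℝ) - 1) * (s + t)⁻¹)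
          = (((p:ℝ) + c) * ((p:ℝ) - 1)) / ((p:ℝ) * (1 + c) ^ 2 * s) := by
        rw [hκeq, htdef]; field_simp
      rw [e1, e2, div_le_div_iff₀ (by positivity) (by positivity)]
      have hnn : (0:ℝ) ≤ ((p:ℝ) - 1) ^ 2 * ((p:ℝ) * (1 + c) * s) :=
        mul_nonneg (sq_nonneg _) (by positivity)
      nlinarith [hnn]
    have h3 : κ * (b i + ((p:ℝ) - 1) * (s + t)⁻¹) ≤ κ * ∑ j, b j :=
      mul_le_mul_of_nonneg_left (hSb i) hκpos.le
    have h4 : b i - κ * b i ≤ κ * (((p:ℝ) - 1) * (s + t)⁻¹) := by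
      calc b i - κ * b i = (1 - κ) * b i := by ring
        _ ≤ _ := h1.trans h2
    have h5 : κ * b i + κ * (((p:ℝ) - 1) * (s + t)⁻¹) ≤ κ * ∑ j, b j := by
      calc κ * b i + κ * (((p:ℝ) - 1) * (s + t)⁻¹)
          = κ * (b i + ((p:ℝ) - 1) * (s + t)⁻¹) := by ring
        _ ≤ _ := h3
    clear_value κ b s t
    linarith
  calc ∑ i, b i * b i * b i * l i
      ≤ ∑ i, (b i * b i * l i) * (κ * ∑ j, b j) := by
        apply Finset.sum_le_sum
        intro i _
        have ha : 0 ≤ b i * b i * l i := mul_nonneg (mul_nonneg (hbpos i).le (hbpos i).le) (hl0 i)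
        calc b i * b i * b i * l i = (b i * b i * l i) * b i := by ring
          _ ≤ (b i * b i * l i) * (κ * ∑ j, b j) := mul_le_mul_of_nonneg_left (hkey i) ha
    _ = (∑ i, b i * b i * l i) * (∑ j, b j) * κ := by
        rw [← Finset.sum_mul]; ring
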